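/- If M := sup_{q≥−1} λ_q^{δ+n/r} a_q < ∞, then Λ_b < ∞ and Λ_b ≤ C · max(1, M/μ) for a constant C depending only on n, r, δ, L, c and C_B. -/

import Mathlib

open scoped ENNReal

/-- The exponent `n/r` for `r ∈ [1,∞]`, with the convention `n/r = 0` when `r = ∞`. -/
noncomputable def nOverR (n : ℕ) (r : ℝ≥0∞) : ℝ :=
  if r = ⊤ then 0 else (n : ℝ) / r.toReal

/-- The admissibility condition at level `q` in the definition of the abstract magnetic
determining wavenumber on the `n`-torus (`λ_q = 2^q`, `s = n/r`):
`(L λ_{p-q})^δ λ_p^{s} a_p < c μ` for every integer `p > q`, and `λ_q^{-1} G_q < c μ`. -/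
def GoodB (L c μ s δ : ℝ) (a G : ℤ → ℝ) (q : ℕ) : Prop :=
  (∀ p : ℤ, (q : ℤ) < p →
      (L * (2:ℝ) ^ (p - (q : ℤ))) ^ δ * ((2:ℝ) ^ p) ^ s * a p < c * μ) ∧
    ((2:ℝ) ^ (q : ℤ))⁻¹ * G q < c * μ

/-- The abstract magnetic determining wavenumber `Λ_b = λ_Q = 2^Q`, where `Q` is the
least admissible natural number; `Λ_b = ∞` if no natural number is admissible. -/
noncomputable def LambdaB (L c μ s δ : ℝ) (a G : ℤ → ℝ) : ℝ≥0∞ :=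
  sInf {x : ℝ≥0∞ | ∃ q : ℕ, GoodB L c μ s δ a G q ∧ x = 2 ^ q}

/-- `(2^p)^x = 2^(p*x)` mixing `zpow` and `rpow`. -/
lemma zpowRpow (p : ℤ) (x : ℝ) : ((2:ℝ) ^ p) ^ x = (2:ℝ) ^ ((p : ℝ) * x) := by
  rw [← Real.rpow_intCast 2 p, ← Real.rpow_mul (by norm_num)]

/-- `(2^x)^p = 2^(p*x)` mixing `rpow` and `zpow`. -/
lemma rpowZpow (x : ℝ) (p : ℤ) : ((2:ℝ) ^ x) ^ p = (2:ℝ) ^ ((p : ℝ) * x) := by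
  rw [← Real.rpow_intCast ((2:ℝ) ^ x) p, ← Real.rpow_mul (by norm_num), mul_comm]

/-- A geometric sum bound over `Icc (-1) Q`. -/
lemma geom_Icc_le {ρ : ℝ} (h0 : 0 < ρ) (h1 : ρ < 1) (Q : ℕ) :
    ∑ p ∈ Finset.Icc (-1 : ℤ) (Q : ℤ), ρ ^ p ≤ ρ⁻¹ * (1 - ρ)⁻¹ := by
  have hre : ∑ p ∈ Finset.Icc (-1 : ℤ) (Q : ℤ), ρ ^ p
      = ∑ j ∈ Finset.range (Q + 2), ρ ^ ((j : ℤ) - 1) := by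
    refine Finset.sum_nbij' (fun p => (p + 1).toNat) (fun j => (j : ℤ) - 1) ?_ ?_ ?_ ?_ ?_
    · intro p hp
      simp only [Finset.mem_Icc] at hp
      simp only [Finset.mem_range]
      beta_reduce
      omega
    · intro j hj
      simp only [Finset.mem_range] at hj
      simp only [Finset.mem_Icc]
      beta_reduce
      omega
    · intro p hp
      simp only [Finset.mem_Icc] at hp
      beta_reduce
      omega
    · intro j hj
      simp only [Finset.mem_range] at hj
      beta_reduce
      omega
    · intro p hp
      simp only [Finset.mem_Icc] at hp
      beta_reduce
      congr 1
      omega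
  rw [hre]
  have hterm : ∀ j : ℕ, ρ ^ ((j : ℤ) - 1) = ρ ^ j * ρ⁻¹ := by
    intro j
    rw [zpow_sub_one₀ (ne_of_gt h0), zpow_natCast]
  simp_rw [hterm, ← Finset.sum_mul]
  have hsum : ∑ j ∈ Finset.range (Q + 2), ρ ^ j ≤ (1 - ρ)⁻¹ := by
    calc ∑ j ∈ Finset.range (Q + 2), ρ ^ j
        ≤ ∑' j : ℕ, ρ ^ j :=
          Summable.sum_le_tsum _ (fun i _ => pow_nonneg h0.le i)
            (summable_geometric_of_lt_one h0.le h1)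
      _ = (1 - ρ)⁻¹ := tsum_geometric_of_lt_one h0.le h1
  calc (∑ j ∈ Finset.range (Q + 2), ρ ^ j) * ρ⁻¹ ≤ (1 - ρ)⁻¹ * ρ⁻¹ :=
        mul_le_mul_of_nonneg_right hsum (inv_nonneg.mpr h0.le)
    _ = ρ⁻¹ * (1 - ρ)⁻¹ := mul_comm _ _

/-- uniform bound on the magnetic determining wavenumber from Besov
regularity. If `M = sup_{q ≥ -1} λ_q^{δ+n/r} a_q < ∞` (expressed by `M` being an upper
bound of this family), then `Λ_b < ∞` and `Λ_b ≤ C max(1, M/μ)` for a constant `C`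
depending only on `n, r, δ, L, c, C_B`. -/
theorem uniform_wavenumber_bound_from_besov
    (n : ℕ) (r : ℝ≥0∞) (δ L c CB : ℝ)
    (hn : 2 ≤ n) (hr : 1 ≤ r) (hδ : 1 < δ) (hL : 1 ≤ L) (hc : 0 < c) (hCB : 0 < CB) :
    ∃ C : ℝ, 0 < C ∧
      ∀ (μ M : ℝ) (a G : ℤ → ℝ), 0 < μ →
        (∀ q : ℤ, -1 ≤ q → 0 ≤ a q) →
        (∀ q : ℤ, -1 ≤ q → 0 ≤ G q) →
        (∀ q : ℤ, -1 ≤ q →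
          G q ≤ CB * ∑ p ∈ Finset.Icc (-1 : ℤ) q, ((2:ℝ) ^ p) ^ (1 + nOverR n r) * a p) →
        (∀ q : ℤ, -1 ≤ q → ((2:ℝ) ^ q) ^ (δ + nOverR n r) * a q ≤ M) →
        LambdaB L c μ (nOverR n r) δ a G ≠ ⊤ ∧
          LambdaB L c μ (nOverR n r) δ a G ≤ ENNReal.ofReal (C * max 1 (M / μ)) := by
  set s := nOverR n r with hs_def
  have hL0 : (0:ℝ) < L := lt_of_lt_of_le one_pos hL
  have hLδ : (0:ℝ) < L ^ δ := Real.rpow_pos_of_pos hL0 δ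
  set ρ : ℝ := (2:ℝ) ^ (1 - δ) with hρ_def
  have hρ0 : 0 < ρ := Real.rpow_pos_of_pos two_pos _
  have hρ1 : ρ < 1 := Real.rpow_lt_one_of_one_lt_of_neg one_lt_two (by linarith)
  set K : ℝ := ρ⁻¹ * (1 - ρ)⁻¹ with hK_def
  have hK0 : 0 < K := mul_pos (inv_pos.mpr hρ0) (inv_pos.mpr (by linarith))
  set A : ℝ := (L ^ δ + CB * K) / c with hA_def
  have hA0 : 0 < A := div_pos (by positivity) hc
  refine ⟨2 * max 1 A, by positivity, ?_⟩
  intro μ M a G hμ ha hG hGB hM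
  have hM0 : 0 ≤ M :=
    le_trans (mul_nonneg (Real.rpow_nonneg (by positivity) _) (ha (-1) le_rfl))
      (hM (-1) le_rfl)
  set X : ℝ := max 1 (A * (M / μ)) with hX_def
  have hX1 : (1:ℝ) ≤ X := le_max_left _ _
  have hX0 : (0:ℝ) < X := lt_of_lt_of_le one_pos hX1
  set Q : ℕ := ⌊Real.logb 2 X⌋₊ + 1 with hQ_def
  have hlogb0 : 0 ≤ Real.logb 2 X := Real.logb_nonneg one_lt_two hX1
  have hgt : X < (2:ℝ) ^ (Q : ℝ) := by
    calc X = (2:ℝ) ^ Real.logb 2 X := (Real.rpow_logb two_pos (by norm_num) hX0).symm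
      _ < (2:ℝ) ^ (Q : ℝ) := by
          apply Real.rpow_lt_rpow_left_iff one_lt_two |>.mpr
          push_cast [hQ_def]
          exact Nat.lt_floor_add_one (Real.logb 2 X)
  have hle2X : (2:ℝ) ^ (Q : ℝ) ≤ 2 * X := by
    have h1 : (2:ℝ) ^ ((⌊Real.logb 2 X⌋₊ : ℝ)) ≤ X := by
      calc (2:ℝ) ^ ((⌊Real.logb 2 X⌋₊ : ℝ)) ≤ (2:ℝ) ^ Real.logb 2 X :=
            Real.rpow_le_rpow_left_iff one_lt_two |>.mpr (Nat.floor_le hlogb0)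
        _ = X := Real.rpow_logb two_pos (by norm_num) hX0
    calc (2:ℝ) ^ (Q : ℝ) = (2:ℝ) ^ ((⌊Real.logb 2 X⌋₊ : ℝ) + 1) := by push_cast [hQ_def]; ring_nf
      _ = (2:ℝ) ^ ((⌊Real.logb 2 X⌋₊ : ℝ)) * 2 := by
          rw [Real.rpow_add two_pos, Real.rpow_one]
      _ ≤ X * 2 := mul_le_mul_of_nonneg_right h1 (by norm_num)
      _ = 2 * X := mul_comm _ _
  have hkey : (L ^ δ + CB * K) * M < c * μ * (2:ℝ) ^ (Q : ℝ) := by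
    have h1 : A * (M / μ) ≤ X := le_max_right _ _
    have h2 : (L ^ δ + CB * K) * M = c * μ * (A * (M / μ)) := by
      rw [hA_def]; field_simp
    calc (L ^ δ + CB * K) * M = c * μ * (A * (M / μ)) := h2
      _ ≤ c * μ * X := mul_le_mul_of_nonneg_left h1 (by positivity)
      _ < c * μ * (2:ℝ) ^ (Q : ℝ) := by
          exact mul_lt_mul_of_pos_left hgt (by positivity)
  have hkey1 : L ^ δ * M < c * μ * (2:ℝ) ^ (Q : ℝ) := by nlinarith [mul_nonneg (mul_nonneg hCB.le hK0.le) hM0]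
  have hkey2 : CB * (K * M) < c * μ * (2:ℝ) ^ (Q : ℝ) := by nlinarith [mul_nonneg hLδ.le hM0]
  have hs0 : 0 ≤ s := by
    rw [hs_def, nOverR]
    split_ifs
    · exact le_rfl
    · positivity
  have hGood : GoodB L c μ s δ a G Q := by
    constructor
    · intro p hp
      have hp1 : (-1:ℤ) ≤ p := by omega
      have e1 : (L * (2:ℝ) ^ (p - (Q : ℤ))) ^ δ * ((2:ℝ) ^ p) ^ s * a p
          = L ^ δ * (2:ℝ) ^ (-((Q:ℝ) * δ)) * (((2:ℝ) ^ p) ^ (δ + s) * a p) := by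
        rw [Real.mul_rpow hL0.le (le_of_lt (zpow_pos two_pos _)),
          zpowRpow, zpowRpow p s, zpowRpow p (δ + s)]
        have hexp : (((p - (Q : ℤ)) : ℤ) : ℝ) * δ + (p : ℝ) * s = -((Q:ℝ) * δ) + (p:ℝ) * (δ + s) := by
          push_cast; ring
        rw [mul_assoc (L ^ δ), ← Real.rpow_add two_pos, hexp, Real.rpow_add two_pos]
        ring
      rw [e1]
      have hb : ((2:ℝ) ^ p) ^ (δ + s) * a p ≤ M := hM p hp1
      have hpos : (0:ℝ) < (2:ℝ) ^ ((Q:ℝ) * δ) := Real.rpow_pos_of_pos two_pos _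
      have h2Q : (2:ℝ) ^ ((Q:ℝ)) ≤ (2:ℝ) ^ ((Q:ℝ) * δ) := by
        apply Real.rpow_le_rpow_left_iff one_lt_two |>.mpr
        nlinarith [Nat.cast_nonneg (α := ℝ) Q]
      have h' : L ^ δ * M < c * μ * (2:ℝ) ^ ((Q:ℝ) * δ) :=
        lt_of_lt_of_le hkey1 (mul_le_mul_of_nonneg_left h2Q (by positivity))
      calc L ^ δ * (2:ℝ) ^ (-((Q:ℝ) * δ)) * (((2:ℝ) ^ p) ^ (δ + s) * a p)
          ≤ L ^ δ * (2:ℝ) ^ (-((Q:ℝ) * δ)) * M :=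
            mul_le_mul_of_nonneg_left hb (by positivity)
        _ = ((2:ℝ) ^ ((Q:ℝ) * δ))⁻¹ * (L ^ δ * M) := by
            rw [Real.rpow_neg (by norm_num)]; ring
        _ < ((2:ℝ) ^ ((Q:ℝ) * δ))⁻¹ * (c * μ * (2:ℝ) ^ ((Q:ℝ) * δ)) :=
            mul_lt_mul_of_pos_left h' (inv_pos.mpr hpos)
        _ = c * μ := by field_simp
    · have hterm : ∀ p ∈ Finset.Icc (-1 : ℤ) (Q : ℤ),
          ((2:ℝ) ^ p) ^ (1 + s) * a p ≤ ρ ^ p * M := by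
        intro p hp
        simp only [Finset.mem_Icc] at hp
        have e : ((2:ℝ) ^ p) ^ (1 + s) * a p = ρ ^ p * (((2:ℝ) ^ p) ^ (δ + s) * a p) := by
          rw [zpowRpow p (1 + s), zpowRpow p (δ + s), hρ_def, rpowZpow,
            ← mul_assoc, ← Real.rpow_add two_pos]
          congr 2
          ring
        rw [e]
        exact mul_le_mul_of_nonneg_left (hM p hp.1) (le_of_lt (zpow_pos hρ0 _))
      have hGQ : G (Q : ℤ) ≤ CB * (K * M) := by
        calc G (Q : ℤ) ≤ CB * ∑ p ∈ Finset.Icc (-1 : ℤ) (Q : ℤ),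
              ((2:ℝ) ^ p) ^ (1 + s) * a p := hGB Q (by omega)
          _ ≤ CB * (K * M) := by
              apply mul_le_mul_of_nonneg_left _ hCB.le
              calc ∑ p ∈ Finset.Icc (-1 : ℤ) (Q : ℤ), ((2:ℝ) ^ p) ^ (1 + s) * a p
                  ≤ ∑ p ∈ Finset.Icc (-1 : ℤ) (Q : ℤ), ρ ^ p * M :=
                    Finset.sum_le_sum hterm
                _ = (∑ p ∈ Finset.Icc (-1 : ℤ) (Q : ℤ), ρ ^ p) * M := by
                    rw [Finset.sum_mul]
                _ ≤ K * M := mul_le_mul_of_nonneg_right (geom_Icc_le hρ0 hρ1 Q) hM0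
      have h2QZ : ((2:ℝ) ^ ((Q:ℤ)) : ℝ) = (2:ℝ) ^ ((Q:ℝ)) := by
        rw [← Real.rpow_intCast 2 (Q:ℤ)]
        norm_num
      have hpos : (0:ℝ) < (2:ℝ) ^ ((Q:ℝ)) := Real.rpow_pos_of_pos two_pos _
      rw [h2QZ]
      calc ((2:ℝ) ^ ((Q:ℝ)))⁻¹ * G (Q : ℤ)
          ≤ ((2:ℝ) ^ ((Q:ℝ)))⁻¹ * (CB * (K * M)) :=
            mul_le_mul_of_nonneg_left hGQ (inv_nonneg.mpr hpos.le)
        _ < ((2:ℝ) ^ ((Q:ℝ)))⁻¹ * (c * μ * (2:ℝ) ^ ((Q:ℝ))) :=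
            mul_lt_mul_of_pos_left hkey2 (inv_pos.mpr hpos)
        _ = c * μ := by field_simp
  have hmem : (2:ℝ≥0∞) ^ Q ∈ {x : ℝ≥0∞ | ∃ q : ℕ, GoodB L c μ s δ a G q ∧ x = 2 ^ q} :=
    ⟨Q, hGood, rfl⟩
  have hle' : LambdaB L c μ s δ a G ≤ (2:ℝ≥0∞) ^ Q := sInf_le hmem
  have hfin : (2:ℝ≥0∞) ^ Q ≠ ⊤ := ENNReal.pow_ne_top (by norm_num)
  refine ⟨ne_top_of_le_ne_top hfin hle', ?_⟩
  have hreal : (2:ℝ) ^ Q ≤ 2 * max 1 A * max 1 (M / μ) := by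
    have hMμ : 0 ≤ M / μ := div_nonneg hM0 hμ.le
    have hXle : X ≤ max 1 A * max 1 (M / μ) := by
      apply max_le
      · calc (1:ℝ) = 1 * 1 := (one_mul 1).symm
          _ ≤ max 1 A * max 1 (M / μ) :=
            mul_le_mul (le_max_left _ _) (le_max_left _ _) zero_le_one
              (le_trans zero_le_one (le_max_left _ _))
      · exact mul_le_mul (le_max_right _ _) (le_max_right _ _) hMμ
          (le_trans zero_le_one (le_max_left _ _))
    calc (2:ℝ) ^ Q = (2:ℝ) ^ ((Q:ℝ)) := by rw [Real.rpow_natCast]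
      _ ≤ 2 * X := hle2X
      _ ≤ 2 * (max 1 A * max 1 (M / μ)) := by linarith
      _ = 2 * max 1 A * max 1 (M / μ) := by ring
  calc LambdaB L c μ s δ a G ≤ (2:ℝ≥0∞) ^ Q := hle'
    _ = ENNReal.ofReal ((2:ℝ) ^ Q) := by
        rw [ENNReal.ofReal_pow (by norm_num)]
        norm_num
    _ ≤ ENNReal.ofReal (2 * max 1 A * max 1 (M / μ)) := ENNReal.ofReal_le_ofReal hreal
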